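/- In a perfect p-partition of sorted blocks: given tp sorted lists B_1,...,B_{tp} whose multiset union has n elements with p ∣ n, there exist split points partitioning each B_i into p consecutive (possibly empty) segments B_i = B_i^1 ++ ... ++ B_i^p such that for each 1 ≤ j ≤ p the multiset union of {B_i^j : 1 ≤ i ≤ tp} has exactly n/p elements, and every element of ∪_i B_i^j is ≤ every element of ∪_i B_i^{j'} for j < j'. -/

import Mathlib

lemma split_exists {α : Type*} [LinearOrder α] {N : ℕ} (B : Fin N → List α)
    (hs : ∀ i, (B i).Pairwise (· ≤ ·)) (x : ℕ) (hx : x ≤ ∑ i, (B i).length) :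
    ∃ c : Fin N → ℕ, (∀ i, c i ≤ (B i).length) ∧ (∑ i, c i = x) ∧
      ∀ i i' : Fin N, ∀ a ∈ (B i).take (c i), ∀ b ∈ (B i').drop (c i'), a ≤ b := by
  induction x with
  | zero =>
    exact ⟨fun _ => 0, fun i => Nat.zero_le _, by simp, by simp⟩
  | succ x ih =>
    obtain ⟨c, hcle, hcsum, hord⟩ := ih (Nat.le_of_succ_le hx)
    have hne : ∃ i, c i < (B i).length := by
      by_contra h
      push_neg at h
      have : ∑ i, (B i).length ≤ ∑ i, c i := Finset.sum_le_sum fun i _ => h i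
      omega
    obtain ⟨i1, hi1⟩ := hne
    set a0 : α := (B i1)[c i1]'hi1 with ha0
    set S : Finset (Fin N) := Finset.univ.filter (fun i => c i < (B i).length) with hS
    have hSne : S.Nonempty := ⟨i1, by simp [hS, hi1]⟩
    set f : Fin N → α := fun i => ((B i).drop (c i)).headD a0 with hf
    obtain ⟨i0, hi0S, hi0min⟩ := S.exists_min_image f hSne
    have hi0len : c i0 < (B i0).length := by simpa [hS] using hi0S
    have hfv : ∀ i (hi : c i < (B i).length), f i = (B i)[c i] := by
      intro i hi
      simp [hf, List.drop_eq_getElem_cons hi, List.getElem?_eq_getElem hi]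
    have hfle : ∀ i, c i < (B i).length → ∀ b ∈ (B i).drop (c i), f i ≤ b := by
      intro i hi b hb
      have hsd : ((B i).drop (c i)).Pairwise (· ≤ ·) :=
        List.Pairwise.sublist (List.drop_sublist _ _) (hs i)
      rw [List.drop_eq_getElem_cons hi] at hb hsd
      rw [hfv i hi]
      rcases List.mem_cons.mp hb with h1 | h1
      · exact le_of_eq h1.symm
      · exact (List.pairwise_cons.mp hsd).1 b h1
    have hkey : ∀ i' : Fin N, ∀ b ∈ (B i').drop (c i'), f i0 ≤ b := by
      intro i' b hb
      by_cases h : c i' < (B i').length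
      · exact le_trans (hi0min i' (by simp [hS, h])) (hfle i' h b hb)
      · push_neg at h
        rw [List.drop_eq_nil_iff.mpr (by omega)] at hb
        simp at hb
    refine ⟨Function.update c i0 (c i0 + 1), ?_, ?_, ?_⟩
    · intro i
      rcases eq_or_ne i i0 with rfl | h
      · simpa using hi0len
      · simpa [Function.update_of_ne h] using hcle i
    · rw [Finset.sum_update_of_mem (Finset.mem_univ i0), Finset.sdiff_singleton_eq_erase]
      have h2 : c i0 + ∑ i ∈ Finset.univ.erase i0, c i = ∑ i, c i :=
        Finset.add_sum_erase _ c (Finset.mem_univ i0)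
      omega
    · intro i i' a ha b hb
      have hb' : b ∈ (B i').drop (c i') := by
        rcases eq_or_ne i' i0 with rfl | h
        · rw [Function.update_self] at hb
          have heq : (B i').drop (c i' + 1) = ((B i').drop (c i')).drop 1 := by
            rw [List.drop_drop]
          rw [heq] at hb
          exact List.mem_of_mem_drop hb
        · rwa [Function.update_of_ne h] at hb
      rcases eq_or_ne i i0 with rfl | h
      · rw [Function.update_self, List.take_succ] at ha
        rcases List.mem_append.mp ha with h1 | h1
        · exact hord i i' a h1 b hb'
        · rw [List.getElem?_eq_getElem hi0len] at h1
          have ha' : a = f i := by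
            rw [hfv i hi0len]
            simpa using h1
          exact ha' ▸ hkey i' b hb'
      · rw [Function.update_of_ne h] at ha
        exact hord i i' a ha b hb'

lemma perfect_partition_aux {α : Type*} [LinearOrder α] {N : ℕ} :
    ∀ p : ℕ, 0 < p → ∀ B : Fin N → List α, (∀ i, (B i).Pairwise (· ≤ ·)) →
    p ∣ (∑ i, (B i).length) →
    ∃ seg : Fin N → Fin p → List α,
      (∀ i, B i = (List.ofFn (seg i)).flatten) ∧
      (∀ j : Fin p, ∑ i, (seg i j).length = (∑ i, (B i).length) / p) ∧
      (∀ j j' : Fin p, j < j' → ∀ i i' : Fin N,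
        ∀ x ∈ seg i j, ∀ y ∈ seg i' j', x ≤ y) := by
  intro p
  induction p with
  | zero => omega
  | succ p ih =>
    intro _ B hs hdvd
    rcases Nat.eq_zero_or_pos p with rfl | hp
    · refine ⟨fun i _ => B i, ?_, ?_, ?_⟩
      · intro i; simp [List.ofFn_succ]
      · intro j; simp
      · intro j j' hjj'
        exact absurd hjj' (by rw [Fin.lt_def]; have := j.isLt; have := j'.isLt; omega)
    · set n := ∑ i, (B i).length with hn
      set m := n / (p + 1) with hm
      have hnm : (p + 1) * m = n := Nat.mul_div_cancel' hdvd
      obtain ⟨c, hcle, hcsum, hord⟩ := split_exists B hs m (Nat.div_le_self n (p + 1))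
      set L : Fin N → List α := fun i => (B i).take (c i) with hL
      set H : Fin N → List α := fun i => (B i).drop (c i) with hH
      have hHs : ∀ i, (H i).Pairwise (· ≤ ·) :=
        fun i => List.Pairwise.sublist (List.drop_sublist _ _) (hs i)
      have hlen' : ∀ i, (H i).length + c i = (B i).length := by
        intro i
        simp only [hH, List.length_drop]
        exact Nat.sub_add_cancel (hcle i)
      have hHlen : ∑ i, (H i).length = p * m := by
        have h1 : ∑ i, ((H i).length + c i) = ∑ i, (B i).length :=
          Finset.sum_congr rfl fun i _ => hlen' i
        rw [Finset.sum_add_distrib] at h1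
        have h2 : (p + 1) * m = p * m + m := by ring
        omega
      obtain ⟨seg', hflat', hsum', hord'⟩ := ih hp H hHs (by rw [hHlen]; exact ⟨m, rfl⟩)
      have hmemH : ∀ i j, ∀ y ∈ seg' i j, y ∈ H i := by
        intro i j y hy
        rw [hflat' i]
        exact List.mem_flatten.mpr ⟨seg' i j, by simp [List.mem_ofFn], hy⟩
      refine ⟨fun i => Fin.cons (L i) (seg' i), ?_, ?_, ?_⟩
      · intro i
        rw [List.ofFn_succ]
        simp only [Fin.cons_zero, Fin.cons_succ, List.flatten_cons]
        rw [← hflat' i]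
        simp [hL, hH]
      · intro j
        induction j using Fin.cases with
        | zero =>
          simp only [Fin.cons_zero]
          have hLl : ∀ i, (L i).length = c i := by
            intro i; simp [hL, List.length_take, Nat.min_eq_left (hcle i)]
          rw [Finset.sum_congr rfl (fun i _ => hLl i), hcsum]
        | succ k =>
          simp only [Fin.cons_succ]
          rw [hsum' k, hHlen, Nat.mul_div_cancel_left _ hp]
      · intro j j' hjj' i i' x hx y hy
        induction j' using Fin.cases with
        | zero => exact absurd hjj' (by simp)
        | succ k' =>
          simp only [Fin.cons_succ] at hy
          induction j using Fin.cases with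
          | zero =>
            simp only [Fin.cons_zero] at hx
            exact hord i i' x hx y (hmemH i' k' y hy)
          | succ k =>
            simp only [Fin.cons_succ] at hx
            exact hord' k k' (Fin.succ_lt_succ_iff.mp hjj') i i' x hx y hy

/-- Perfect p-partition: given sorted blocks B_1, ..., B_N whose total length n is
divisible by p, each block can be split into p consecutive segments so that the j-th
segments together contain exactly n/p elements, and every element of the j-th
segments is ≤ every element of the j'-th segments for j < j'. -/
theorem perfect_partition {α : Type*} [LinearOrder α] {N p n : ℕ} (hp : 0 < p)
    (B : Fin N → List α) (hsorted : ∀ i, (B i).Pairwise (· ≤ ·))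
    (hn : ∑ i, (B i).length = n) (hdvd : p ∣ n) :
    ∃ seg : Fin N → Fin p → List α,
      (∀ i, B i = (List.ofFn (seg i)).flatten) ∧
      (∀ j : Fin p, ∑ i, (seg i j).length = n / p) ∧
      (∀ j j' : Fin p, j < j' → ∀ i i' : Fin N,
        ∀ x ∈ seg i j, ∀ y ∈ seg i' j', x ≤ y) := by
  subst hn
  exact perfect_partition_aux p hp B hsorted hdvd
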